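/- Let L be a tree language recognized by a GPTA. Then there exist constants l, p > 0 such that for every tree ξ ∈ L containing at least l pairwise independent subtrees of height at least p, there exist k ≥ 0, contexts ζ₁ ∈ C_Σ(X₂), ζ₂ ∈ C_Σ(X_{k+1}) with 0 < height(ζ₂) < p, trees s₁,…,s_k, t₁,…,t_k, u₁, u₂ ∈ T_Σ, and j ∈ [k+1], such that (1) ξ = ζ₁[ζ₂[s₁,…,s_{j-1},x₁,s_j,…,s_k]·u₁, ζ₂[t₁,…,t_{j-1},x₁,t_j,…,t_k]·u₂], (2) ζ₁[u₁, ζ₂[s…]·ζ₂[t…]·u₂] ∈ L, and (3) ζ₁[ζ₂[s…]·ζ₂[t…]·u₁, u₂] ∈ L (where ζ₂[s…] abbreviates ζ₂[s₁,…,s_{j-1},x₁,s_j,…,s_k] and similarly for t). -/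

import Mathlib

/-! ## Trees over ranked alphabets: a symbol `s` has `ar s` children -/

inductive GTree (S : Type) (ar : S → ℕ) : Type where
  | node (s : S) (c : Fin (ar s) → GTree S ar) : GTree S ar

namespace GTree
variable {S : Type} {ar : S → ℕ}

/-- The height of a tree (leaves have height 0). -/
def height : GTree S ar → ℕ
  | node _ c => Finset.univ.sup fun i => height (c i) + 1

/-- The size (number of positions) of a tree. -/
def size : GTree S ar → ℕ
  | node _ c => 1 + ∑ i, size (c i)

/-- The subtree at a position (a list of child indices), if the position exists. -/
def subAt : GTree S ar → List ℕ → Option (GTree S ar)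
  | t, [] => some t
  | node s c, i :: ρ => if h : i < ar s then subAt (c ⟨i, h⟩) ρ else none

/-- The list of path words of all complete (root-to-leaf) paths. -/
def pathWords : GTree S ar → List (List S)
  | node s c =>
    if _ : ar s = 0 then [[s]]
    else ((List.finRange (ar s)).map fun i => (pathWords (c i)).map (s :: ·)).flatten

end GTree

/-! ## Semilinear sets -/

def IsLinearSetFin {m : ℕ} (C : Set (Fin m → ℕ)) : Prop :=
  ∃ (l : ℕ) (d0 : Fin m → ℕ) (d : Fin l → Fin m → ℕ),
    C = {v | ∃ c : Fin l → ℕ, v = d0 + ∑ i, c i • d i}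

def IsSemilinear {m : ℕ} (C : Set (Fin m → ℕ)) : Prop :=
  ∃ (k : ℕ) (L : Fin k → Set (Fin m → ℕ)), (∀ i, IsLinearSetFin (L i)) ∧ C = ⋃ i, L i

/-! ## Contexts -/

abbrev arCtx {S : Type} (ar : S → ℕ) : S ⊕ ℕ → ℕ := Sum.elim ar fun _ => 0

/-- Trees over `Σ` and (nullary) variables `x_1, x_2, …` (variable `x_{j+1}` is
represented by the label `Sum.inr j`). -/
abbrev Ctx (S : Type) (ar : S → ℕ) := GTree (S ⊕ ℕ) (arCtx ar)

/-- The occurrences of variables, as (position, variable index) pairs, in DFS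
(= lexicographic) order. -/
def varOccs {S : Type} {ar : S → ℕ} : Ctx S ar → List (List ℕ × ℕ)
  | .node (.inl s) c =>
      ((List.finRange (ar s)).map fun i =>
        (varOccs (c i)).map fun p => (i.1 :: p.1, p.2)).flatten
  | .node (.inr j) _ => [([], j)]

/-- A member of `C_Σ(X_k)`: exactly the variables `x_1, …, x_k` occur, each exactly
once, and in lexicographic left-to-right order. -/
def IsContext {S : Type} {ar : S → ℕ} (k : ℕ) (t : Ctx S ar) : Prop :=
  (varOccs t).map Prod.snd = List.range k

/-- Substitution of trees for the variables of a context (`f j` replaces `x_{j+1}`). -/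
def substC {S : Type} {ar : S → ℕ} (f : ℕ → GTree S ar) : Ctx S ar → GTree S ar
  | .node (.inl s) c => .node s fun i => substC f (c i)
  | .node (.inr j) _ => f j

/-- The assignment `[s 0, …, s (j-1), hole, s j, s (j+1), …]`, i.e. variable `j` is
sent to `hole` and the remaining variables to `s 0, s 1, …` in order. -/
def slot {S : Type} {ar : S → ℕ} (sv : ℕ → GTree S ar) (j : ℕ) (hole : GTree S ar) :
    ℕ → GTree S ar :=
  fun i => if i = j then hole else if i < j then sv i else sv (i - 1)

/-- The assignment `[t1, t2]` for a context with two variables. -/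
def pick2 {S : Type} {ar : S → ℕ} (t1 t2 : GTree S ar) : ℕ → GTree S ar :=
  fun i => if i = 0 then t1 else t2

/-! ## Global Parikh tree automata (GPTA) -/

structure GPTA (S : Type) (ar : S → ℕ) (m : ℕ) where
  Q : Type
  finQ : Fintype Q
  init : Q
  D : Finset (Fin m → ℕ)
  trans : Q → (s : S) → (Fin m → ℕ) → (Fin (ar s) → Q) → Prop
  transD : ∀ q s d f, trans q s d f → d ∈ D
  C : Set (Fin m → ℕ)
  semiC : IsSemilinear C

/-- `A.Run q ξ v` : there is a run of `A` from state `q` on a `D`-decoration of `ξ`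
whose extended Parikh image (the sum of all vectors over all positions) is `v`. -/
inductive GPTA.Run {S : Type} {ar : S → ℕ} {m : ℕ} (A : GPTA S ar m) :
    A.Q → GTree S ar → (Fin m → ℕ) → Prop where
  | node {q : A.Q} {s : S} {d : Fin m → ℕ} {f : Fin (ar s) → A.Q}
      {c : Fin (ar s) → GTree S ar} {v : Fin (ar s) → Fin m → ℕ}
      (ht : A.trans q s d f) (hc : ∀ i, GPTA.Run A (f i) (c i) (v i)) :
      GPTA.Run A q (.node s c) (d + ∑ i, v i)

def GPTA.Lang {S : Type} {ar : S → ℕ} {m : ℕ} (A : GPTA S ar m) : Set (GTree S ar) :=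
  {ξ | ∃ v, A.Run A.init ξ v ∧ v ∈ A.C}


/-! ### Auxiliary development for the exchange lemma -/

namespace ExchangeAux

open GTree List

variable {S : Type} {ar : S → ℕ}

/-- Replace the subtree at a position. -/
def replaceAt : GTree S ar → List ℕ → GTree S ar → GTree S ar
  | _, [], w => w
  | .node s c, i :: ρ, w =>
      if h : i < ar s then .node s (Function.update c ⟨i, h⟩ (replaceAt (c ⟨i, h⟩) ρ w))
      else .node s c

@[simp] lemma subAt_nil : ∀ t : GTree S ar, subAt t [] = some t
  | .node _ _ => rfl

lemma subAt_cons (s : S) (c : Fin (ar s) → GTree S ar) (i : ℕ) (ρ : List ℕ) :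
    subAt (GTree.node s c) (i :: ρ) = if h : i < ar s then subAt (c ⟨i, h⟩) ρ else none := rfl

@[simp] lemma replaceAt_nil : ∀ t w : GTree S ar, replaceAt t [] w = w
  | .node _ _, _ => rfl

lemma replaceAt_cons (s : S) (c : Fin (ar s) → GTree S ar) (i : ℕ) (ρ : List ℕ)
    (w : GTree S ar) :
    replaceAt (GTree.node s c) (i :: ρ) w =
      if h : i < ar s then GTree.node s (Function.update c ⟨i, h⟩ (replaceAt (c ⟨i, h⟩) ρ w))
      else GTree.node s c := rfl

lemma subAt_append : ∀ (ρ : List ℕ) (t : GTree S ar) (σ : List ℕ),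
    subAt t (ρ ++ σ) = (subAt t ρ).bind fun u => subAt u σ
  | [], GTree.node s c, σ => rfl
  | i :: ρ, GTree.node s c, σ => by
      rw [List.cons_append, subAt_cons, subAt_cons]
      split
      · exact subAt_append ρ _ σ
      · rfl

lemma replaceAt_self : ∀ (ρ : List ℕ) (t u : GTree S ar), subAt t ρ = some u →
    replaceAt t ρ u = t
  | [], GTree.node s c, u, h => by
      rw [subAt_nil] at h
      rw [(Option.some.inj h).symm]
      rfl
  | i :: ρ, GTree.node s c, u, h => by
      rw [subAt_cons] at h
      rw [replaceAt_cons]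
      split
      case isTrue hi =>
        rw [dif_pos hi] at h
        rw [replaceAt_self ρ _ u h]
        exact congrArg _ (Function.update_eq_self _ _)
      case isFalse hi => rfl


/-! ### Variable lists -/

/-- The list of variables (in DFS order) of a context. -/
def vlist (t : Ctx S ar) : List ℕ := (varOccs t).map Prod.snd

lemma vlist_inl (s : S) (c : Fin (ar s) → Ctx S ar) :
    vlist (GTree.node (Sum.inl s) c) =
      ((List.finRange (ar s)).map fun i => vlist (c i)).flatten := by
  show (((List.finRange (ar s)).map fun i =>
      (varOccs (c i)).map fun p => (i.1 :: p.1, p.2)).flatten).map Prod.snd = _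
  rw [List.map_flatten, List.map_map]
  congr 1
  refine List.map_congr_left fun i _ => ?_
  simp [Function.comp, vlist, List.map_map]

@[simp] lemma vlist_inr (j : ℕ) (c : Fin (arCtx ar (Sum.inr j)) → Ctx S ar) :
    vlist (GTree.node (Sum.inr j) c) = [j] := rfl

lemma isContext_iff (k : ℕ) (t : Ctx S ar) : IsContext k t ↔ vlist t = List.range k :=
  Iff.rfl

lemma substC_congr : ∀ (ζ : Ctx S ar) (f g : ℕ → GTree S ar),
    (∀ t ∈ vlist ζ, f t = g t) → substC f ζ = substC g ζ
  | GTree.node (Sum.inl s) c, f, g, h => by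
      show GTree.node s _ = GTree.node s _
      congr 1
      funext i
      refine substC_congr (c i) f g fun t ht => h t ?_
      erw [vlist_inl]
      simp only [List.mem_flatten, List.mem_map]
      exact ⟨vlist (c i), ⟨i, List.mem_finRange i, rfl⟩, ht⟩
  | GTree.node (Sum.inr j) c, f, g, h => h j (by simp)

@[simp] lemma substC_inr (f : ℕ → GTree S ar) (j : ℕ) (c) :
    substC f (GTree.node (Sum.inr j) c) = f j := rfl

@[simp] lemma substC_inl (f : ℕ → GTree S ar) (s : S) (c) :
    substC f (GTree.node (Sum.inl s) c) = GTree.node s fun i => substC f (c i) := rfl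

/-- Embedding of trees into contexts. -/
def emb : GTree S ar → Ctx S ar
  | .node s c => .node (.inl s) fun i => emb (c i)

@[simp] lemma substC_emb (f : ℕ → GTree S ar) : ∀ t : GTree S ar, substC f (emb t) = t
  | .node s c => by
      unfold emb
      rw [substC_inl]
      congr 1
      funext i
      exact substC_emb f (c i)

@[simp] lemma vlist_emb : ∀ t : GTree S ar, vlist (emb t) = []
  | .node s c => by
      unfold emb
      erw [vlist_inl]
      simp only [List.flatten_eq_nil_iff, List.mem_map]
      rintro l ⟨i, -, rfl⟩
      exact vlist_emb (c i)

/-- A variable as a context. -/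
def cvar (t : ℕ) : Ctx S ar := .node (.inr t) Fin.elim0

@[simp] lemma substC_cvar (f : ℕ → GTree S ar) (t : ℕ) : substC f (cvar t) = f t := rfl

@[simp] lemma vlist_cvar (t : ℕ) : vlist (cvar (S := S) (ar := ar) t) = [t] := rfl

@[simp] lemma height_cvar (t : ℕ) : (cvar (S := S) (ar := ar) t).height = 0 := by
  show Finset.univ.sup _ = 0
  simp

end ExchangeAux

namespace ExchangeAux

open GTree List

variable {S : Type} {ar : S → ℕ}

/-! ### List helpers -/

lemma flatten_singletons : ∀ l : List ℕ, (l.map fun t => [t]).flatten = l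
  | [] => rfl
  | a :: l => by simp [flatten_singletons l]

lemma flatten_range_single {β : Type} : ∀ (n : ℕ) (i : ℕ) (h : ℕ → List β), i < n →
    (∀ t, t < n → t ≠ i → h t = []) → ((List.range n).map h).flatten = h i
  | 0, i, h, hi, _ => absurd hi (Nat.not_lt_zero i)
  | n + 1, i, h, hi, h0 => by
      rw [List.range_succ, List.map_append, List.flatten_append]
      rcases Nat.lt_or_ge i n with hin | hin
      · rw [flatten_range_single n i h hin fun t ht => h0 t (Nat.lt_succ_of_lt ht)]
        simp [h0 n (Nat.lt_succ_self n) (by omega)]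
      · have : i = n := by omega
        subst this
        have : ((List.range i).map h).flatten = [] := by
          rw [List.flatten_eq_nil_iff]
          intro l hl
          simp only [List.mem_map, List.mem_range] at hl
          obtain ⟨t, ht, rfl⟩ := hl
          exact h0 t (by omega) (by omega)
        rw [this]
        simp

lemma flatten_range_double {β : Type} : ∀ (n : ℕ) (i j : ℕ) (h : ℕ → List β), i < j → j < n →
    (∀ t, t < n → t ≠ i → t ≠ j → h t = []) →
    ((List.range n).map h).flatten = h i ++ h j
  | 0, i, j, h, _, hj, _ => absurd hj (Nat.not_lt_zero j)
  | n + 1, i, j, h, hij, hj, h0 => by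
      rw [List.range_succ, List.map_append, List.flatten_append]
      rcases Nat.lt_or_ge j n with hjn | hjn
      · rw [flatten_range_double n i j h hij hjn fun t ht => h0 t (Nat.lt_succ_of_lt ht)]
        simp [h0 n (Nat.lt_succ_self n) (by omega) (by omega)]
      · have : j = n := by omega
        subst this
        rw [flatten_range_single j i h hij
          fun t ht hti => h0 t (by omega) hti (by omega)]
        simp

/-! ### Prefix helpers -/

/-- `a` branches off lexicographically to the left of `b`. -/
def SplitLex (a b : List ℕ) : Prop :=
  ∃ (π : List ℕ) (x y : ℕ) (σ τ : List ℕ), x < y ∧ a = π ++ x :: σ ∧ b = π ++ y :: τ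

lemma splitLex_total : ∀ a b : List ℕ, ¬ a <+: b → ¬ b <+: a → SplitLex a b ∨ SplitLex b a
  | [], b, h, _ => absurd List.nil_prefix h
  | _ :: _, [], _, h => absurd List.nil_prefix h
  | x :: a, y :: b, h1, h2 => by
      rcases Nat.lt_trichotomy x y with hxy | rfl | hxy
      · exact Or.inl ⟨[], x, y, a, b, hxy, rfl, rfl⟩
      · have h1' : ¬ a <+: b := fun hp => h1 (List.cons_prefix_cons.2 ⟨rfl, hp⟩)
        have h2' : ¬ b <+: a := fun hp => h2 (List.cons_prefix_cons.2 ⟨rfl, hp⟩)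
        rcases splitLex_total a b h1' h2' with ⟨π, u, w, σ, τ, huw, ha, hb⟩ |
          ⟨π, u, w, σ, τ, huw, ha, hb⟩
        · exact Or.inl ⟨x :: π, u, w, σ, τ, huw, by simp [ha], by simp [hb]⟩
        · exact Or.inr ⟨x :: π, u, w, σ, τ, huw, by simp [ha], by simp [hb]⟩
      · exact Or.inr ⟨[], y, x, b, a, hxy, rfl, rfl⟩

lemma not_prefix_append {a b σ τ : List ℕ} (h1 : ¬ a <+: b) (h2 : ¬ b <+: a) :
    ¬ (a ++ σ) <+: (b ++ τ) := by
  intro hp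
  have ha : a <+: b ++ τ := (List.prefix_append a σ).trans hp
  have hb : b <+: b ++ τ := List.prefix_append b τ
  rcases List.prefix_or_prefix_of_prefix ha hb with h | h
  · exact h1 h
  · exact h2 h

/-! ### Variable shifting -/

def shiftVar (n : ℕ) : Ctx S ar → Ctx S ar
  | .node (.inl s) c => .node (.inl s) fun i => shiftVar n (c i)
  | .node (.inr j) _ => cvar (j + n)

lemma vlist_shiftVar (n : ℕ) : ∀ ζ : Ctx S ar,
    vlist (shiftVar n ζ) = (vlist ζ).map (· + n)
  | .node (.inl s) c => by
      unfold shiftVar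
      erw [vlist_inl, vlist_inl, List.map_flatten, List.map_map]
      congr 1
      refine List.map_congr_left fun i _ => ?_
      simp only [Function.comp]
      exact vlist_shiftVar n (c i)
  | .node (.inr j) c => by unfold shiftVar; simp

lemma substC_shiftVar (n : ℕ) (f : ℕ → GTree S ar) : ∀ ζ : Ctx S ar,
    substC f (shiftVar n ζ) = substC (fun t => f (t + n)) ζ
  | .node (.inl s) c => by
      unfold shiftVar
      rw [substC_inl, substC_inl]
      congr 1
      funext i
      exact substC_shiftVar n f (c i)
  | .node (.inr j) c => by unfold shiftVar; simp

lemma height_node (s : S) (c : Fin (ar s) → GTree S ar) :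
    (GTree.node s c).height = Finset.univ.sup fun i => (c i).height + 1 := rfl

lemma height_shiftVar (n : ℕ) : ∀ ζ : Ctx S ar, (shiftVar n ζ).height = ζ.height
  | .node (.inl s) c => by
      unfold shiftVar
      rw [height_node, height_node]
      congr 1
      funext i
      rw [height_shiftVar n (c i)]
  | .node (.inr j) c => by
      unfold shiftVar
      rw [height_cvar, height_node]
      symm
      simp

/-! ### A refined formula for `vlist` at inner nodes -/

lemma vlist_inl' (s : S) (c : Fin (ar s) → Ctx S ar) (h : ℕ → List ℕ)
    (hh : ∀ i : Fin (ar s), vlist (c i) = h i.1) :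
    vlist (GTree.node (Sum.inl s) c) = ((List.range (ar s)).map h).flatten := by
  rw [vlist_inl, ← List.map_coe_finRange_eq_range (n := ar s), List.map_map]
  congr 1
  exact List.map_congr_left fun i _ => hh i

/-! ### Digging holes -/

def dig : GTree S ar → List ℕ → ℕ → Ctx S ar
  | _, [], n => cvar n
  | .node s c, i :: ρ, n =>
      .node (.inl s) fun i' => if i'.1 = i then dig (c i') ρ n else emb (c i')

lemma vlist_dig : ∀ (ρ : List ℕ) (t u : GTree S ar) (n : ℕ), subAt t ρ = some u →
    vlist (dig t ρ n) = [n]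
  | [], GTree.node s c, u, n, _ => by unfold dig; simp
  | i :: ρ, GTree.node s c, u, n, h => by
      rw [subAt_cons] at h
      by_cases hi : i < ar s
      · rw [dif_pos hi] at h
        unfold dig
        erw [vlist_inl' s _ (fun t' => if t' = i then [n] else []) ?_,
          flatten_range_single (ar s) i _ hi (fun t _ hti => by simp [hti]), if_pos rfl]
        intro i'
        by_cases hii : i'.1 = i
        · simpa [hii] using vlist_dig ρ (c i') u n (by
            have : i' = ⟨i, hi⟩ := Fin.ext hii
            rw [this]; exact h)
        · simp [hii]
      · rw [dif_neg hi] at h; exact absurd h (by simp)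

lemma substC_dig : ∀ (ρ : List ℕ) (t u : GTree S ar) (n : ℕ) (f : ℕ → GTree S ar),
    subAt t ρ = some u →
    substC f (dig t ρ n) = replaceAt t ρ (f n)
  | [], GTree.node s c, u, n, f, _ => by unfold dig; simp
  | i :: ρ, GTree.node s c, u, n, f, h => by
      rw [subAt_cons] at h
      by_cases hi : i < ar s
      · rw [dif_pos hi] at h
        unfold dig
        rw [substC_inl, replaceAt_cons, dif_pos hi]
        congr 1
        funext i'
        by_cases hii : i'.1 = i
        · have hie : i' = ⟨i, hi⟩ := Fin.ext hii
          subst hie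
          rw [if_pos rfl, Function.update_self]
          exact substC_dig ρ _ u n f h
        · rw [if_neg hii, substC_emb,
            Function.update_of_ne (fun he => hii (by rw [he])) _ _]
      · rw [dif_neg hi] at h; exact absurd h (by simp)

def dig2 : GTree S ar → List ℕ → List ℕ → Ctx S ar
  | .node s c, i :: ρa, j :: ρb =>
      if i = j then
        .node (.inl s) fun i' => if i'.1 = i then dig2 (c i') ρa ρb else emb (c i')
      else
        .node (.inl s) fun i' =>
          if i'.1 = i then dig (c i') ρa 0
          else if i'.1 = j then dig (c i') ρb 1 else emb (c i')
  | t, _, _ => emb t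

lemma vlist_dig2 : ∀ (π : List ℕ) (t : GTree S ar) (x y : ℕ) (σ τ : List ℕ)
    (ua ub : GTree S ar), x < y →
    subAt t (π ++ x :: σ) = some ua → subAt t (π ++ y :: τ) = some ub →
    vlist (dig2 t (π ++ x :: σ) (π ++ y :: τ)) = [0, 1]
  | [], GTree.node s c, x, y, σ, τ, ua, ub, hxy, ha, hb => by
      rw [List.nil_append, List.nil_append] at *
      rw [subAt_cons] at ha hb
      by_cases hx : x < ar s
      · by_cases hy : y < ar s
        · rw [dif_pos hx] at ha
          rw [dif_pos hy] at hb
          unfold dig2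
          rw [if_neg (by omega)]
          erw [vlist_inl' s _
            (fun t' => if t' = x then [0] else if t' = y then [1] else []) ?_,
            flatten_range_double (ar s) x y _ hxy hy
              (fun t _ htx hty => by simp [htx, hty]),
            if_pos rfl, if_neg (by omega : ¬ y = x), if_pos rfl]
          · rfl
          intro i'
          by_cases hix : i'.1 = x
          · simpa [hix, (by omega : ¬ x = y)] using vlist_dig σ (c i') ua 0 (by
              have : i' = ⟨x, hx⟩ := Fin.ext hix
              rw [this]; exact ha)
          · by_cases hiy : i'.1 = y
            · have hyx : (y = x) = False := by simp; omega
              simpa [hix, hiy, hyx] using vlist_dig τ (c i') ub 1 (by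
                have : i' = ⟨y, hy⟩ := Fin.ext hiy
                rw [this]; exact hb)
            · simp [hix, hiy]
        · rw [dif_neg hy] at hb; exact absurd hb (by simp)
      · rw [dif_neg hx] at ha; exact absurd ha (by simp)
  | z :: π, GTree.node s c, x, y, σ, τ, ua, ub, hxy, ha, hb => by
      rw [List.cons_append] at ha hb
      rw [subAt_cons] at ha hb
      by_cases hz : z < ar s
      · rw [dif_pos hz] at ha hb
        rw [List.cons_append, List.cons_append]
        simp only [dig2, eq_self_iff_true, if_true]
        erw [vlist_inl' s _ (fun t' => if t' = z then [0, 1] else []) ?_,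
          flatten_range_single (ar s) z _ hz (fun t _ htz => by simp [htz]), if_pos rfl]
        intro i'
        by_cases hiz : i'.1 = z
        · simpa [hiz] using vlist_dig2 π (c i') x y σ τ ua ub hxy (by
            have : i' = ⟨z, hz⟩ := Fin.ext hiz
            rw [this]; exact ha) (by
            have : i' = ⟨z, hz⟩ := Fin.ext hiz
            rw [this]; exact hb)
        · simp [hiz]
      · rw [dif_neg hz] at ha; exact absurd ha (by simp)

lemma substC_dig2 : ∀ (π : List ℕ) (t : GTree S ar) (x y : ℕ) (σ τ : List ℕ)
    (ua ub : GTree S ar) (f : ℕ → GTree S ar), x < y →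
    subAt t (π ++ x :: σ) = some ua → subAt t (π ++ y :: τ) = some ub →
    substC f (dig2 t (π ++ x :: σ) (π ++ y :: τ)) =
      replaceAt (replaceAt t (π ++ x :: σ) (f 0)) (π ++ y :: τ) (f 1)
  | [], GTree.node s c, x, y, σ, τ, ua, ub, f, hxy, ha, hb => by
      rw [List.nil_append, List.nil_append] at *
      rw [subAt_cons] at ha hb
      by_cases hx : x < ar s
      · by_cases hy : y < ar s
        · rw [dif_pos hx] at ha
          rw [dif_pos hy] at hb
          unfold dig2
          rw [if_neg (by omega), substC_inl, replaceAt_cons, dif_pos hx,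
            replaceAt_cons, dif_pos hy]
          rw [Function.update_of_ne (a := (⟨y, hy⟩ : Fin (ar s)))
            (fun he => by exact absurd (congrArg Fin.val he) (by simp; omega)) _ _]
          congr 1
          funext i'
          by_cases hix : i'.1 = x
          · have : i' = ⟨x, hx⟩ := Fin.ext hix
            subst this
            rw [if_pos rfl,
              Function.update_of_ne
                (fun he => by exact absurd (congrArg Fin.val he) (by simp; omega)) _ _,
              Function.update_self]
            exact substC_dig σ _ ua 0 f ha
          · by_cases hiy : i'.1 = y
            · have : i' = ⟨y, hy⟩ := Fin.ext hiy
              subst this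
              rw [if_neg (by omega), if_pos rfl, Function.update_self]
              exact substC_dig τ _ ub 1 f hb
            · rw [if_neg hix, if_neg hiy, substC_emb,
                Function.update_of_ne (fun he => hiy (by rw [he])) _ _,
                Function.update_of_ne (fun he => hix (by rw [he])) _ _]
        · rw [dif_neg hy] at hb; exact absurd hb (by simp)
      · rw [dif_neg hx] at ha; exact absurd ha (by simp)
  | z :: π, GTree.node s c, x, y, σ, τ, ua, ub, f, hxy, ha, hb => by
      rw [List.cons_append] at ha hb
      rw [subAt_cons] at ha hb
      by_cases hz : z < ar s
      · rw [dif_pos hz] at ha hb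
        rw [List.cons_append, List.cons_append]
        simp only [dig2, eq_self_iff_true, if_true]
        rw [substC_inl, replaceAt_cons, dif_pos hz, replaceAt_cons, dif_pos hz,
          Function.update_self, Function.update_idem]
        congr 1
        funext i'
        by_cases hiz : i'.1 = z
        · have : i' = ⟨z, hz⟩ := Fin.ext hiz
          subst this
          rw [if_pos rfl, Function.update_self]
          exact substC_dig2 π _ x y σ τ ua ub f hxy ha hb
        · rw [if_neg hiz, substC_emb,
            Function.update_of_ne (fun he => hiz (by rw [he])) _ _]
      · rw [dif_neg hz] at ha; exact absurd ha (by simp)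

end ExchangeAux

namespace ExchangeAux

open GTree List

variable {S : Type} {ar : S → ℕ} {m : ℕ} {A : GPTA S ar m}

/-! ### Run derivations (as data) -/

inductive RunT (A : GPTA S ar m) : A.Q → GTree S ar → (Fin m → ℕ) → Type where
  | node {q : A.Q} {s : S} {d : Fin m → ℕ} {f : Fin (ar s) → A.Q}
      {c : Fin (ar s) → GTree S ar} {v : Fin (ar s) → Fin m → ℕ}
      (ht : A.trans q s d f) (hc : ∀ i, RunT A (f i) (c i) (v i)) :
      RunT A q (.node s c) (d + ∑ i, v i)

def RunT.toRun : ∀ {q ξ v}, RunT A q ξ v → A.Run q ξ v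
  | _, _, _, .node ht hc => .node ht fun i => (hc i).toRun

lemma run_nonempty : ∀ {q ξ v}, A.Run q ξ v → Nonempty (RunT A q ξ v) := by
  intro q ξ v h
  induction h with
  | node ht hc ih =>
      exact (Classical.nonempty_pi.2 ih).map fun g => RunT.node ht g

abbrev SubData (A : GPTA S ar m) :=
  (q' : A.Q) × (ξ' : GTree S ar) × (v' : Fin m → ℕ) × RunT A q' ξ' v'

def subD : {q : A.Q} → {ξ : GTree S ar} → {v : Fin m → ℕ} → RunT A q ξ v → List ℕ →
    Option (SubData A)
  | q, ξ, v, D, [] => some ⟨q, ξ, v, D⟩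
  | _, _, _, RunT.node (s := s) ht hc, i :: ρ =>
      if h : i < ar s then subD (hc ⟨i, h⟩) ρ else none

@[simp] lemma subD_nil {q ξ v} (D : RunT A q ξ v) : subD D [] = some ⟨q, ξ, v, D⟩ := by
  cases D; rfl

lemma subD_cons {q : A.Q} {s : S} {d : Fin m → ℕ} {f : Fin (ar s) → A.Q}
    {c : Fin (ar s) → GTree S ar} {v : Fin (ar s) → Fin m → ℕ}
    (ht : A.trans q s d f) (hc : ∀ i, RunT A (f i) (c i) (v i)) (i : ℕ) (ρ : List ℕ) :
    subD (RunT.node ht hc) (i :: ρ) =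
      if h : i < ar s then subD (hc ⟨i, h⟩) ρ else none := rfl

lemma subD_subAt : ∀ (ρ : List ℕ) {q ξ v} (D : RunT A q ξ v) (s' : SubData A),
    subD D ρ = some s' → subAt ξ ρ = some s'.2.1
  | [], q, ξ, v, D, s', h => by
      rw [subD_nil] at h
      obtain rfl := Option.some.inj h
      simp
  | i :: ρ, q, _, _, RunT.node (s := s) ht hc, s', h => by
      rw [subD_cons] at h
      rw [subAt_cons]
      by_cases hi : i < ar s
      · rw [dif_pos hi] at h
        rw [dif_pos hi]
        exact subD_subAt ρ (hc ⟨i, hi⟩) s' h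
      · rw [dif_neg hi] at h; exact absurd h (by simp)

lemma subD_exists : ∀ (ρ : List ℕ) {q ξ v} (D : RunT A q ξ v) {u : GTree S ar},
    subAt ξ ρ = some u → ∃ s' : SubData A, subD D ρ = some s' ∧ s'.2.1 = u
  | [], q, ξ, v, D, u, h => by
      rw [subAt_nil] at h
      exact ⟨⟨q, ξ, v, D⟩, subD_nil D, Option.some.inj h⟩
  | i :: ρ, q, _, _, RunT.node (s := s) ht hc, u, h => by
      rw [subAt_cons] at h
      by_cases hi : i < ar s
      · rw [dif_pos hi] at h
        obtain ⟨s', hs', hu⟩ := subD_exists ρ (hc ⟨i, hi⟩) h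
        exact ⟨s', by rw [subD_cons, dif_pos hi]; exact hs', hu⟩
      · rw [dif_neg hi] at h; exact absurd h (by simp)

lemma subD_append : ∀ (ρ : List ℕ) {q ξ v} (D : RunT A q ξ v) (σ : List ℕ),
    subD D (ρ ++ σ) = (subD D ρ).bind fun s' => subD s'.2.2.2 σ
  | [], q, ξ, v, D, σ => by rw [subD_nil]; rfl
  | i :: ρ, q, _, _, RunT.node (s := s) ht hc, σ => by
      rw [List.cons_append, subD_cons, subD_cons]
      by_cases hi : i < ar s
      · rw [dif_pos hi, dif_pos hi]
        exact subD_append ρ (hc ⟨i, hi⟩) σ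
      · rw [dif_neg hi, dif_neg hi]; rfl

/-! ### Extraction and recombination of runs -/

lemma A1T : ∀ (ρ : List ℕ) {q ξ v} (D : RunT A q ξ v) (s' : SubData A),
    subD D ρ = some s' →
    ∃ vc, v = vc + s'.2.2.1 ∧
      ∀ w vw, A.Run s'.1 w vw → A.Run q (replaceAt ξ ρ w) (vc + vw)
  | [], q, ξ, v, D, s', h => by
      rw [subD_nil] at h
      obtain rfl := Option.some.inj h
      exact ⟨0, by simp, fun w vw hw => by simpa using hw⟩
  | i :: ρ, q, _, _, RunT.node (s := s) (d := d) (f := f) (c := c) (v := vs) ht hc, s', h => by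
      rw [subD_cons] at h
      by_cases hi : i < ar s
      swap
      · rw [dif_neg hi] at h; exact absurd h (by simp)
      rw [dif_pos hi] at h
      set k : Fin (ar s) := ⟨i, hi⟩ with hk
      obtain ⟨vc', heq, hrep⟩ := A1T ρ (hc k) s' h
      refine ⟨d + vc' + ∑ i' ∈ Finset.univ.erase k, vs i', ?_, ?_⟩
      · rw [← Finset.add_sum_erase _ vs (Finset.mem_univ k), heq]
        abel
      · intro w vw hw
        have hrun := hrep w vw hw
        rw [replaceAt_cons, dif_pos hi]
        have hall : ∀ i', A.Run (f i')
            (Function.update c k (replaceAt (c k) ρ w) i')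
            (Function.update vs k (vc' + vw) i') := by
          intro i'
          by_cases hik : i' = k
          · subst hik
            rw [Function.update_self, Function.update_self]
            exact hrun
          · rw [Function.update_of_ne hik, Function.update_of_ne hik]
            exact (hc i').toRun
        have := GPTA.Run.node ht hall
        have hval : d + ∑ i', Function.update vs k (vc' + vw) i'
            = d + vc' + (∑ i' ∈ Finset.univ.erase k, vs i') + vw := by
          rw [Finset.sum_update_of_mem (Finset.mem_univ k)]
          simp only [Finset.erase_eq]
          abel
        rwa [hval] at this

lemma A2T : ∀ (ρa ρb : List ℕ) {q ξ v} (D : RunT A q ξ v) (sa sb : SubData A),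
    subD D ρa = some sa → subD D ρb = some sb →
    ¬ (ρa <+: ρb) → ¬ (ρb <+: ρa) →
    ∃ vc, v = vc + sa.2.2.1 + sb.2.2.1 ∧
      ∀ a' va' b' vb', A.Run sa.1 a' va' → A.Run sb.1 b' vb' →
        A.Run q (replaceAt (replaceAt ξ ρa a') ρb b') (vc + va' + vb')
  | [], ρb, q, ξ, v, D, sa, sb, ha, hb, hab, hba => absurd List.nil_prefix hab
  | i :: ρa, [], q, ξ, v, D, sa, sb, ha, hb, hab, hba => absurd List.nil_prefix hba
  | i :: ρa, j :: ρb, q, _, _,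
      RunT.node (s := s) (d := d) (f := f) (c := c) (v := vs) ht hc, sa, sb,
      ha, hb, hab, hba => by
      rw [subD_cons] at ha hb
      by_cases hi : i < ar s
      swap
      · rw [dif_neg hi] at ha; exact absurd ha (by simp)
      by_cases hj : j < ar s
      swap
      · rw [dif_neg hj] at hb; exact absurd hb (by simp)
      rw [dif_pos hi] at ha
      rw [dif_pos hj] at hb
      by_cases hij : i = j
      · -- same head: recurse
        subst hij
        set k : Fin (ar s) := ⟨i, hi⟩ with hk
        have ha' : subD (hc k) ρa = some sa := by
          convert ha using 3
        have hb' : subD (hc k) ρb = some sb := hb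
        have hab' : ¬ (ρa <+: ρb) := fun hp => hab (List.cons_prefix_cons.2 ⟨rfl, hp⟩)
        have hba' : ¬ (ρb <+: ρa) := fun hp => hba (List.cons_prefix_cons.2 ⟨rfl, hp⟩)
        obtain ⟨vc', heq, hrep⟩ := A2T ρa ρb (hc k) sa sb ha' hb' hab' hba'
        refine ⟨d + vc' + ∑ i' ∈ Finset.univ.erase k, vs i', ?_, ?_⟩
        · rw [← Finset.add_sum_erase _ vs (Finset.mem_univ k), heq]
          abel
        · intro a' va' b' vb' hA hB
          have hrun := hrep a' va' b' vb' hA hB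
          rw [replaceAt_cons, dif_pos hi, replaceAt_cons, dif_pos hi,
            Function.update_self, Function.update_idem]
          have hall : ∀ i', A.Run (f i')
              (Function.update c k (replaceAt (replaceAt (c k) ρa a') ρb b') i')
              (Function.update vs k (vc' + va' + vb') i') := by
            intro i'
            by_cases hik : i' = k
            · subst hik
              rw [Function.update_self, Function.update_self]
              exact hrun
            · rw [Function.update_of_ne hik, Function.update_of_ne hik]
              exact (hc i').toRun
          have := GPTA.Run.node ht hall
          have hval : d + ∑ i', Function.update vs k (vc' + va' + vb') i'
              = d + vc' + (∑ i' ∈ Finset.univ.erase k, vs i') + va' + vb' := by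
            rw [Finset.sum_update_of_mem (Finset.mem_univ k)]
            simp only [Finset.erase_eq]
            abel
          rwa [hval] at this
      · -- different heads
        set ka : Fin (ar s) := ⟨i, hi⟩ with hka
        set kb : Fin (ar s) := ⟨j, hj⟩ with hkb
        have hkab : ka ≠ kb := fun he => hij (congrArg Fin.val he)
        obtain ⟨vca, heqa, hrepa⟩ := A1T ρa (hc ka) sa ha
        obtain ⟨vcb, heqb, hrepb⟩ := A1T ρb (hc kb) sb hb
        have hmem : ka ∈ Finset.univ.erase kb :=
          Finset.mem_erase.2 ⟨hkab, Finset.mem_univ ka⟩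
        refine ⟨d + vca + vcb + ∑ i' ∈ (Finset.univ.erase kb).erase ka, vs i', ?_, ?_⟩
        · rw [← Finset.add_sum_erase _ vs (Finset.mem_univ kb),
            ← Finset.add_sum_erase _ vs hmem, heqa, heqb]
          abel
        · intro a' va' b' vb' hA hB
          have hruna := hrepa a' va' hA
          have hrunb := hrepb b' vb' hB
          rw [replaceAt_cons, dif_pos hi, replaceAt_cons, dif_pos hj,
            Function.update_of_ne (Ne.symm hkab)]
          have hall : ∀ i', A.Run (f i')
              (Function.update (Function.update c ka (replaceAt (c ka) ρa a'))
                kb (replaceAt (c kb) ρb b') i')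
              (Function.update (Function.update vs ka (vca + va'))
                kb (vcb + vb') i') := by
            intro i'
            by_cases hikb : i' = kb
            · subst hikb
              rw [Function.update_self, Function.update_self]
              exact hrunb
            · rw [Function.update_of_ne hikb, Function.update_of_ne hikb]
              by_cases hika : i' = ka
              · subst hika
                rw [Function.update_self, Function.update_self]
                exact hruna
              · rw [Function.update_of_ne hika, Function.update_of_ne hika]
                exact (hc i').toRun
          have := GPTA.Run.node ht hall
          have hval : d + ∑ i', Function.update (Function.update vs ka (vca + va'))
              kb (vcb + vb') i'
              = d + vca + vcb + (∑ i' ∈ (Finset.univ.erase kb).erase ka, vs i')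
                + va' + vb' := by
            rw [Finset.sum_update_of_mem (Finset.mem_univ kb),
              ← Finset.erase_eq, Finset.sum_update_of_mem hmem]
            simp only [Finset.erase_eq]
            abel
          rwa [hval] at this

end ExchangeAux

namespace ExchangeAux

open GTree List

variable {S : Type} {ar : S → ℕ} {m : ℕ} {A : GPTA S ar m}

/-- `Spine A q u v q' u' v' h`: `u` is obtained from `u'` by wrapping it in a
context of height `h` which, on the run side, transforms any run from `q'` into a
run from `q`, adding a fixed vector. -/
def Spine (A : GPTA S ar m) (q : A.Q) (u : GTree S ar) (v : Fin m → ℕ)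
    (q' : A.Q) (u' : GTree S ar) (v' : Fin m → ℕ) (h : ℕ) : Prop :=
  ∃ (k j : ℕ) (ζ : Ctx S ar) (sv : ℕ → GTree S ar) (vζ : Fin m → ℕ),
    IsContext (k + 1) ζ ∧ ζ.height = h ∧ j < k + 1 ∧
    u = substC (slot sv j u') ζ ∧ v = vζ + v' ∧
    ∀ w vw, A.Run q' w vw → A.Run q (substC (slot sv j w) ζ) (vζ + vw)

lemma Spine.refl {q : A.Q} {u : GTree S ar} {v : Fin m → ℕ} (hr : A.Run q u v) :
    Spine A q u v q u v 0 := by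
  refine ⟨0, 0, cvar 0, fun _ => u, 0, ?_, height_cvar 0, Nat.zero_lt_one, ?_, ?_, ?_⟩
  · rw [isContext_iff]
    simp [List.range_succ]
  · simp [slot]
  · simp
  · intro w vw hw
    simpa [slot] using hw

lemma Spine.ext {q : A.Q} {s : S} {d : Fin m → ℕ} {f : Fin (ar s) → A.Q}
    {c : Fin (ar s) → GTree S ar} {vs : Fin (ar s) → Fin m → ℕ}
    (ht : A.trans q s d f) (hcr : ∀ i', A.Run (f i') (c i') (vs i'))
    (i : Fin (ar s)) {q' : A.Q} {u' : GTree S ar} {v' : Fin m → ℕ} {h : ℕ}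
    (hsp : Spine A (f i) (c i) (vs i) q' u' v' h) :
    Spine A q (.node s c) (d + ∑ i', vs i') q' u' v' (h + 1) := by
  obtain ⟨k, j, ζ, sv, vζ, hctx, hh, hjk, hu, hv, hrun⟩ := hsp
  have hvl : vlist ζ = List.range (k + 1) := hctx
  -- the new pieces
  set sv' : ℕ → GTree S ar := fun t =>
    if h1 : t < i.1 then c ⟨t, lt_trans h1 i.2⟩
    else if t < i.1 + k then sv (t - i.1)
    else if h2 : t - k + 1 < ar s then c ⟨t - k + 1, h2⟩ else u' with hsv'
  set ch : Fin (ar s) → Ctx S ar := fun i' =>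
    if i'.1 < i.1 then cvar i'.1
    else if i'.1 = i.1 then shiftVar i.1 ζ
    else cvar (i'.1 + k) with hch
  -- slot computation
  have hslot : ∀ (X : GTree S ar) (t : ℕ), t ≤ k →
      slot sv' (i.1 + j) X (t + i.1) = slot sv j X t := by
    intro X t htk
    simp only [slot, hsv']
    split_ifs <;>
      first
        | rfl
        | (exact congrArg sv (by omega))
        | (exact congrArg c (Fin.ext (by omega)))
        | omega
        | (exfalso; omega)
  -- substitution computation
  have hsubst : ∀ X : GTree S ar,
      substC (slot sv' (i.1 + j) X) (GTree.node (Sum.inl s) ch)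
        = GTree.node s (Function.update c i (substC (slot sv j X) ζ)) := by
    intro X
    erw [substC_inl]
    congr 1
    funext i'
    rcases Nat.lt_trichotomy i'.1 i.1 with hlt | heq | hgt
    · rw [hch]
      simp only [if_pos hlt]
      rw [substC_cvar, Function.update_of_ne (fun he => by rw [he] at hlt; omega)]
      simp only [slot, hsv']
      rw [if_neg (by omega), if_pos (by omega), dif_pos hlt]
    · have hie : i' = i := Fin.ext heq
      subst hie
      rw [hch]
      simp only [if_neg (lt_irrefl i'.1), eq_self_iff_true, if_true]
      rw [Function.update_self, substC_shiftVar]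
      refine substC_congr ζ _ _ fun t htv => ?_
      have htk : t < k + 1 := by
        rw [hvl] at htv
        simpa using htv
      exact hslot X t (by omega)
    · rw [hch]
      simp only [if_neg (by omega : ¬ i'.1 < i.1), if_neg (by omega : ¬ i'.1 = i.1)]
      rw [substC_cvar, Function.update_of_ne (fun he => by rw [he] at hgt; omega)]
      simp only [slot, hsv']
      rw [if_neg (by omega), if_neg (by omega), dif_neg (by omega), if_neg (by omega),
        dif_pos (show i'.1 + k - 1 - k + 1 < ar s by omega)]
      exact congrArg c (Fin.ext (show i'.1 + k - 1 - k + 1 = i'.1 by omega))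
  have hks : k + (ar s - 1) + 1 = k + ar s := by
    have := i.2; omega
  refine ⟨k + (ar s - 1), i.1 + j, GTree.node (Sum.inl s) ch, sv',
    d + vζ + ∑ i' ∈ Finset.univ.erase i, vs i', ?_, ?_, by omega, ?_, ?_, ?_⟩
  · -- IsContext
    rw [isContext_iff, hks]
    rw [vlist_inl' s ch (fun t =>
      if t < i.1 then [t] else if t = i.1 then (List.range (k + 1)).map (· + i.1)
      else [t + k]) ?_]
    swap
    · intro i''
      rw [hch]
      rcases Nat.lt_trichotomy i''.1 i.1 with hlt | heq | hgt
      · simp only [if_pos hlt]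
        rw [vlist_cvar]
      · simp only [heq, if_neg (lt_irrefl i.1), eq_self_iff_true, if_true]
        rw [vlist_shiftVar, hvl]
      · simp only [if_neg (by omega : ¬ i''.1 < i.1), if_neg (by omega : ¬ i''.1 = i.1)]
        rw [vlist_cvar]
    · -- flatten computation
      have hsplit : List.range (ar s) =
          (List.range i.1 ++ [i.1]) ++ (List.range (ar s - i.1 - 1)).map ((i.1 + 1) + ·) := by
        rw [← List.range_succ, ← List.range_add]
        congr 1
        have := i.2; omega
      rw [hsplit, List.map_append, List.map_append, List.flatten_append,
        List.flatten_append]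
      have e1 : ((List.range i.1).map fun t =>
          if t < i.1 then [t] else if t = i.1 then (List.range (k + 1)).map (· + i.1)
          else [t + k]).flatten = List.range i.1 := by
        rw [List.map_congr_left (g := fun t => [t]) fun t ht => by
          rw [if_pos (List.mem_range.1 ht)]]
        exact flatten_singletons _
      have e2 : (([i.1].map fun t =>
          if t < i.1 then [t] else if t = i.1 then (List.range (k + 1)).map (· + i.1)
          else [t + k]).flatten) = (List.range (k + 1)).map (· + i.1) := by
        simp
      have e3 : ((((List.range (ar s - i.1 - 1)).map ((i.1 + 1) + ·)).map fun t =>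
          if t < i.1 then [t] else if t = i.1 then (List.range (k + 1)).map (· + i.1)
          else [t + k]).flatten) =
          (List.range (ar s - i.1 - 1)).map fun r => i.1 + (k + 1 + r) := by
        rw [List.map_map,
          List.map_congr_left (g := (fun t => [t]) ∘ fun r => i.1 + (k + 1 + r))
            fun t ht => by
              simp only [Function.comp]
              rw [if_neg (by omega), if_neg (by omega)]
              congr 1
              omega,
          ← List.map_map]
        rw [flatten_singletons]
      rw [e1, e2, e3]
      have hra : k + ar s = i.1 + ((k + 1) + (ar s - i.1 - 1)) := by
        have := i.2; omega
      have hrhs : List.range (k + ar s) = List.range i.1 ++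
          ((List.range (k + 1)).map (i.1 + ·) ++
            (List.range (ar s - i.1 - 1)).map fun r => i.1 + (k + 1 + r)) := by
        rw [hra, List.range_add]
        congr 1
        rw [List.range_add, List.map_append, List.map_map]
        rfl
      rw [hrhs, ← List.append_assoc]
      congr 2
      exact List.map_congr_left fun t _ => Nat.add_comm t i.1
  · -- height
    erw [height_node]
    apply _root_.le_antisymm
    · refine Finset.sup_le fun i'' _ => ?_
      simp only [hch]
      rcases Nat.lt_trichotomy i''.1 i.1 with hlt | heq | hgt
      · rw [if_pos hlt, height_cvar]; omega
      · rw [if_neg (by omega), if_pos heq, height_shiftVar, hh]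
      · rw [if_neg (by omega), if_neg (by omega), height_cvar]; omega
    · have hchi : ch i = shiftVar i.1 ζ := by
        simp [hch]
      have he2 : h + 1 = height (ch i) + 1 := by
        rw [hchi, height_shiftVar, hh]
      rw [he2]
      exact Finset.le_sup (f := fun i'' => height (ch i'') + 1) (Finset.mem_univ i)
  · -- tree equality
    rw [hsubst u', ← hu, Function.update_eq_self]
  · -- value equality
    rw [← Finset.add_sum_erase _ vs (Finset.mem_univ i), hv]
    abel
  · -- run transformation
    intro w vw hw
    rw [hsubst w]
    have hall : ∀ i', A.Run (f i')
        (Function.update c i (substC (slot sv j w) ζ) i')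
        (Function.update vs i (vζ + vw) i') := by
      intro i'
      by_cases hik : i' = i
      · subst hik
        rw [Function.update_self, Function.update_self]
        exact hrun w vw hw
      · rw [Function.update_of_ne hik, Function.update_of_ne hik]
        exact hcr i'
    have hnode := GPTA.Run.node ht hall
    have hval : d + ∑ i', Function.update vs i (vζ + vw) i'
        = d + vζ + (∑ i' ∈ Finset.univ.erase i, vs i') + vw := by
      rw [Finset.sum_update_of_mem (Finset.mem_univ i)]
      simp only [Finset.erase_eq]
      abel
    rwa [hval] at hnode

/-- Chains of nested spines along a tall path. -/
lemma chain (p' : ℕ) : ∀ {q : A.Q} {u : GTree S ar} {v : Fin m → ℕ}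
    (D : RunT A q u v), p' ≤ u.height →
    ∃ (π : ℕ → List ℕ) (G : ℕ → SubData A),
      π 0 = [] ∧ G 0 = ⟨q, u, v, D⟩ ∧
      (∀ e, e ≤ p' → subD D (π e) = some (G e)) ∧
      (∀ d1 d2, d1 ≤ d2 → d2 ≤ p' →
        Spine A (G d1).1 (G d1).2.1 (G d1).2.2.1 (G d2).1 (G d2).2.1 (G d2).2.2.1
          (d2 - d1)) := by
  induction p' with
  | zero =>
      intro q u v D _
      refine ⟨fun _ => [], fun _ => ⟨q, u, v, D⟩, rfl, rfl, ?_, ?_⟩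
      · intro e he
        have : e = 0 := by omega
        subst this
        simp
      · intro d1 d2 h12 h2
        have hd1 : d1 = 0 := by omega
        have hd2 : d2 = 0 := by omega
        subst hd1; subst hd2
        simpa using Spine.refl D.toRun
  | succ p' ih =>
      intro q u v D hp
      cases D with
      | node ht hc =>
        rename_i s d f c vs
        rw [height_node] at hp
        obtain ⟨i, -, hle⟩ := (Finset.le_sup_iff (Nat.succ_pos p')).1 hp
        have hi : p' ≤ (c i).height := by omega
        obtain ⟨π', G', hπ0, hG0, hsub, hspine⟩ := ih (hc i) hi
        refine ⟨fun n => Nat.casesOn n [] fun e => i.1 :: π' e,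
          fun n => Nat.casesOn n ⟨q, _, _, RunT.node ht hc⟩ fun e => G' e,
          rfl, rfl, ?_, ?_⟩
        · intro e he
          match e with
          | 0 => simp
          | .succ e =>
              show subD (RunT.node ht hc) (i.1 :: π' e) = some (G' e)
              rw [subD_cons, dif_pos i.2]
              have : (⟨i.1, i.2⟩ : Fin (ar s)) = i := Fin.eta i i.2
              rw [this]
              exact hsub e (by omega)
        · intro d1 d2 h12 h2
          match d1, d2 with
          | 0, 0 => simpa using Spine.refl (RunT.node ht hc).toRun
          | 0, .succ e =>
              have hsp := hspine 0 e (Nat.zero_le e) (by omega)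
              rw [hG0] at hsp
              have hext := Spine.ext ht (fun i' => (hc i').toRun) i (by simpa using hsp)
              simpa using hext
          | .succ e1, .succ e2 =>
              have := hspine e1 e2 (by omega) (by omega)
              simpa [Nat.succ_sub_succ] using this

end ExchangeAux

namespace ExchangeAux

open GTree List

variable {S : Type} {ar : S → ℕ}

/-- All labels of a tree lie in `F`. -/
def labelsIn {L : Type} {arL : L → ℕ} (F : Set L) : GTree L arL → Prop
  | .node s c => s ∈ F ∧ ∀ i, labelsIn F (c i)

lemma finite_of_height_lt {L : Type} {arL : L → ℕ} {F : Set L} (hF : F.Finite)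
    (p : ℕ) : {t : GTree L arL | t.height < p ∧ labelsIn F t}.Finite := by
  induction p with
  | zero =>
      refine Set.Finite.subset (Set.finite_empty) ?_
      rintro t ⟨h, -⟩
      omega
  | succ p ih =>
      haveI := hF.fintype
      haveI := ih.fintype
      refine Set.Finite.subset (Set.finite_range
        (fun z : (Σ s : F, Fin (arL s.1) →
            {t : GTree L arL // t ∈ {t : GTree L arL | t.height < p ∧ labelsIn F t}}) =>
          (GTree.node z.1.1 fun i => (z.2 i).1 : GTree L arL))) ?_
      rintro t ⟨hht, hlab⟩
      cases t with
      | node s c =>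
        have hlab' : s ∈ F ∧ ∀ i, labelsIn F (c i) := hlab
        refine ⟨⟨⟨s, hlab'.1⟩, fun i => ⟨c i, ?_, hlab'.2 i⟩⟩, rfl⟩
        have hle : (c i).height + 1 ≤ (GTree.node s c).height := by
          rw [height_node]
          exact Finset.le_sup (f := fun i' => (c i').height + 1) (Finset.mem_univ i)
        have hht' : (GTree.node s c).height < p + 1 := hht
        omega

lemma labelsIn_of_vlist {B : ℕ} :
    ∀ ζ : Ctx S ar, (∀ t ∈ vlist ζ, t < B) →
    labelsIn (Set.range (Sum.inl : S → S ⊕ ℕ) ∪ Sum.inr '' Set.Iio B) ζ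
  | .node (.inl s) c, hv => by
      refine ⟨Or.inl ⟨s, rfl⟩, fun i => labelsIn_of_vlist (c i) fun t ht => hv t ?_⟩
      erw [vlist_inl]
      simp only [List.mem_flatten, List.mem_map]
      exact ⟨vlist (c i), ⟨i, List.mem_finRange i, rfl⟩, ht⟩
  | .node (.inr j) c, hv => by
      refine ⟨Or.inr ⟨j, hv j (by simp), rfl⟩, fun i => i.elim0⟩

lemma vlist_length_le [Fintype S] :
    ∀ ζ : Ctx S ar, (vlist ζ).length ≤ (Finset.univ.sup ar + 1) ^ ζ.height
  | .node (.inl s) c => by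
      set M := Finset.univ.sup ar with hM
      erw [vlist_inl, List.length_flatten, List.map_map]
      set H := (GTree.node (Sum.inl s) c).height with hH
      rcases Nat.eq_zero_or_pos (ar s) with h0 | hpos
      · have : List.finRange (ar s) = [] := by
          rw [h0]; rfl
        rw [this]
        simp only [List.map_nil, List.sum_nil]
        exact Nat.zero_le _
      · have hH1 : 1 ≤ H := by
          rw [hH, height_node]
          have hls : (c ⟨0, hpos⟩).height + 1 ≤ Finset.univ.sup fun i' => (c i').height + 1 :=
            Finset.le_sup (f := fun i' => (c i').height + 1) (Finset.mem_univ (⟨0, hpos⟩ : Fin (ar s)))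
          omega
        have hbound : ∀ x ∈ (List.finRange (ar s)).map
            ((fun l : List ℕ => l.length) ∘ fun i => vlist (c i)),
            x ≤ (M + 1) ^ (H - 1) := by
          intro x hx
          replace hx := List.mem_map.1 hx
          obtain ⟨i, -, rfl⟩ := hx
          simp only [Function.comp]
          refine le_trans (vlist_length_le (c i)) ?_
          refine Nat.pow_le_pow_right (by omega) ?_
          have hls : (c i).height + 1 ≤ Finset.univ.sup fun i' => (c i').height + 1 :=
            Finset.le_sup (f := fun i' => (c i').height + 1) (Finset.mem_univ i)
          rw [hH, height_node]
          omega
        refine le_trans (List.sum_le_card_nsmul _ _ hbound) ?_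
        rw [List.length_map, List.length_finRange, smul_eq_mul]
        have har : ar s ≤ M := Finset.le_sup (Finset.mem_univ s)
        calc ar s * (M + 1) ^ (H - 1) ≤ (M + 1) * (M + 1) ^ (H - 1) :=
              Nat.mul_le_mul_right _ (by omega)
          _ = (M + 1) ^ (H - 1 + 1) := by rw [Nat.pow_succ]; ring
          _ = (M + 1) ^ H := by congr 1; omega
  | .node (.inr j) c => by
      rw [vlist_inr]
      exact Nat.one_le_iff_ne_zero.2 (Nat.pos_iff_ne_zero.1
        (Nat.pow_pos (by omega)))

end ExchangeAux

/-! Exchange lemma for GPTA. -/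

open ExchangeAux

theorem gpta_exchange {S : Type} [Fintype S] {ar : S → ℕ} {m : ℕ}
    (A : GPTA S ar m) (L : Set (GTree S ar)) (hL : L = A.Lang) :
    ∃ l p : ℕ, 0 < l ∧ 0 < p ∧
      ∀ ξ ∈ L,
        (∃ ρ : Fin l → List ℕ,
          (∀ i j, i ≠ j → ¬ (ρ i <+: ρ j)) ∧
          (∀ i, ∃ u, ξ.subAt (ρ i) = some u ∧ p ≤ u.height)) →
        ∃ (k : ℕ) (ζ1 ζ2 : Ctx S ar) (sv tv : ℕ → GTree S ar)
          (u1 u2 : GTree S ar) (j : ℕ),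
          IsContext 2 ζ1 ∧ IsContext (k + 1) ζ2 ∧
          0 < ζ2.height ∧ ζ2.height < p ∧ j < k + 1 ∧
          ξ = substC (pick2 (substC (slot sv j u1) ζ2) (substC (slot tv j u2) ζ2)) ζ1 ∧
          substC (pick2 u1 (substC (slot sv j (substC (slot tv j u2) ζ2)) ζ2)) ζ1 ∈ L ∧
          substC (pick2 (substC (slot sv j (substC (slot tv j u1) ζ2)) ζ2) u2) ζ1 ∈ L := by
  classical
  subst hL
  haveI : Fintype A.Q := A.finQ
  set n := Fintype.card A.Q with hn
  set p := n + 1 with hp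
  set M := Finset.univ.sup ar with hM
  set B := (M + 1) ^ p with hB
  set F : Set (S ⊕ ℕ) := Set.range Sum.inl ∪ Sum.inr '' Set.Iio B with hF
  have hFfin : F.Finite := (Set.finite_range _).union ((Set.finite_Iio B).image _)
  have hTfin : {t : Ctx S ar | t.height < p ∧ ExchangeAux.labelsIn F t}.Finite :=
    ExchangeAux.finite_of_height_lt hFfin p
  set PH := (Finset.univ : Finset A.Q) ×ˢ hTfin.toFinset ×ˢ Finset.range B with hPH
  refine ⟨PH.card + 1, p, Nat.succ_pos _, Nat.succ_pos _, ?_⟩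
  rintro ξ hξ ⟨ρ, hind, hsubs⟩
  obtain ⟨v, hrun, hvC⟩ := hξ
  obtain ⟨D⟩ := ExchangeAux.run_nonempty hrun
  have key : ∀ i : Fin (PH.card + 1), ∃ (τ : List ℕ) (sd1 sd2 : ExchangeAux.SubData A)
      (kk jj : ℕ) (ζ : Ctx S ar) (sv : ℕ → GTree S ar) (vζ : Fin m → ℕ),
      (∃ σ, τ = ρ i ++ σ) ∧ ExchangeAux.subD D τ = some sd1 ∧
      sd1.1 = sd2.1 ∧
      IsContext (kk + 1) ζ ∧ 0 < ζ.height ∧ ζ.height < p ∧ jj < kk + 1 ∧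
      sd1.2.1 = substC (slot sv jj sd2.2.1) ζ ∧
      sd1.2.2.1 = vζ + sd2.2.2.1 ∧
      (∀ w vw, A.Run sd2.1 w vw → A.Run sd1.1 (substC (slot sv jj w) ζ) (vζ + vw)) ∧
      A.Run sd2.1 sd2.2.1 sd2.2.2.1 ∧
      ζ ∈ hTfin.toFinset ∧ jj < B := by
    intro i
    obtain ⟨ui, hsubi, hhi⟩ := hsubs i
    obtain ⟨sd, hsd, hsdu⟩ := ExchangeAux.subD_exists (ρ i) D hsubi
    have hhn : n ≤ sd.2.1.height := by rw [hsdu]; omega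
    obtain ⟨π, G, hπ0, hG0, hsubc, hsp⟩ := ExchangeAux.chain n sd.2.2.2 hhn
    obtain ⟨d1', d2', hne, hqeq⟩ := Fintype.exists_ne_map_eq_of_card_lt
      (fun e : Fin (n + 1) => (G e.1).1) (by rw [Fintype.card_fin]; omega)
    obtain ⟨d1, d2, h12, h2n, hq⟩ :
        ∃ d1 d2, d1 < d2 ∧ d2 ≤ n ∧ (G d1).1 = (G d2).1 := by
      rcases Nat.lt_trichotomy d1'.1 d2'.1 with hlt | heqq | hgt
      · exact ⟨d1'.1, d2'.1, hlt, by omega, hqeq⟩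
      · exact absurd (Fin.ext heqq) hne
      · exact ⟨d2'.1, d1'.1, hgt, by omega, hqeq.symm⟩
    have hsp12 := hsp d1 d2 (le_of_lt h12) h2n
    obtain ⟨kk, jj, ζ, sv, vζ, hctx, hhζ, hjk, hteq, hveq, hwrap⟩ := hsp12
    have hkB : kk + 1 ≤ B := by
      have h1 : (vlist ζ).length = kk + 1 := by
        rw [(ExchangeAux.isContext_iff _ _).1 hctx, List.length_range]
      have h2 := ExchangeAux.vlist_length_le ζ
      rw [h1, hhζ] at h2
      rw [hB]
      calc kk + 1 ≤ (M + 1) ^ (d2 - d1) := h2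
        _ ≤ (M + 1) ^ p := Nat.pow_le_pow_right (by omega) (by omega)
    refine ⟨ρ i ++ π d1, G d1, G d2, kk, jj, ζ, sv, vζ, ⟨π d1, rfl⟩, ?_, hq, hctx,
      by omega, by omega, hjk, hteq, hveq, hwrap, (G d2).2.2.2.toRun, ?_, by omega⟩
    · rw [ExchangeAux.subD_append, hsd]
      exact hsubc d1 (by omega)
    · rw [Set.Finite.mem_toFinset]
      refine ⟨by omega, ExchangeAux.labelsIn_of_vlist ζ fun t ht => ?_⟩
      rw [(ExchangeAux.isContext_iff _ _).1 hctx] at ht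
      have := List.mem_range.1 ht
      omega
  choose τ sd1 sd2 kk jj ζf svf vζf hpre hsubD hst hctx hpos hlt hjkf hteqf hveqf
    hwrapf hrun2 hmemT hjBf using key
  have hindep : ∀ i1 i2 : Fin (PH.card + 1), i1 ≠ i2 → ¬ τ i1 <+: τ i2 := by
    intro i1 i2 h12
    obtain ⟨σ1, he1⟩ := hpre i1
    obtain ⟨σ2, he2⟩ := hpre i2
    rw [he1, he2]
    exact ExchangeAux.not_prefix_append (hind i1 i2 h12) (hind i2 i1 (Ne.symm h12))
  suffices main : ∀ i1 i2 : Fin (PH.card + 1), i1 ≠ i2 →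
      ((sd1 i1).1, ζf i1, jj i1) = ((sd1 i2).1, ζf i2, jj i2) →
      ExchangeAux.SplitLex (τ i1) (τ i2) →
      (∃ (k : ℕ) (ζ1 ζ2 : Ctx S ar) (sv tv : ℕ → GTree S ar)
          (u1 u2 : GTree S ar) (j : ℕ),
        IsContext 2 ζ1 ∧ IsContext (k + 1) ζ2 ∧
        0 < ζ2.height ∧ ζ2.height < p ∧ j < k + 1 ∧
        ξ = substC (pick2 (substC (slot sv j u1) ζ2) (substC (slot tv j u2) ζ2)) ζ1 ∧
        substC (pick2 u1 (substC (slot sv j (substC (slot tv j u2) ζ2)) ζ2)) ζ1 ∈ A.Lang ∧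
        substC (pick2 (substC (slot sv j (substC (slot tv j u1) ζ2)) ζ2) u2) ζ1 ∈ A.Lang) by
    obtain ⟨ia, -, ib, -, hiab, hphi⟩ :=
      Finset.exists_ne_map_eq_of_card_lt_of_maps_to
        (s := (Finset.univ : Finset (Fin (PH.card + 1)))) (t := PH)
        (f := fun i => ((sd1 i).1, ζf i, jj i))
        (by rw [Finset.card_univ, Fintype.card_fin]; omega)
        (fun i _ => Finset.mem_product.2 ⟨Finset.mem_univ _,
          Finset.mem_product.2 ⟨hmemT i, Finset.mem_range.2 (hjBf i)⟩⟩)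
    rcases ExchangeAux.splitLex_total (τ ia) (τ ib) (hindep ia ib hiab)
      (hindep ib ia (Ne.symm hiab)) with hsl | hsl
    · exact main ia ib hiab hphi hsl
    · exact main ib ia (Ne.symm hiab) hphi.symm hsl
  intro i1 i2 h12 heq3 hsl
  obtain ⟨πc, x, y, σ, τ', hxy, hE1, hE2⟩ := hsl
  have hq12 : (sd1 i1).1 = (sd1 i2).1 := congrArg (fun z => z.1) heq3
  have hζ12 : ζf i1 = ζf i2 := congrArg (fun z => z.2.1) heq3
  have hj12 : jj i1 = jj i2 := congrArg (fun z => z.2.2) heq3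
  have hsub1 : ξ.subAt (τ i1) = some (sd1 i1).2.1 :=
    ExchangeAux.subD_subAt _ D _ (hsubD i1)
  have hsub2 : ξ.subAt (τ i2) = some (sd1 i2).2.1 :=
    ExchangeAux.subD_subAt _ D _ (hsubD i2)
  have ha : ξ.subAt (πc ++ x :: σ) = some (sd1 i1).2.1 := by rw [← hE1]; exact hsub1
  have hb : ξ.subAt (πc ++ y :: τ') = some (sd1 i2).2.1 := by rw [← hE2]; exact hsub2
  obtain ⟨vc, hvtot, hrep⟩ := ExchangeAux.A2T (τ i1) (τ i2) D (sd1 i1) (sd1 i2)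
    (hsubD i1) (hsubD i2) (hindep i1 i2 h12) (hindep i2 i1 (Ne.symm h12))
  -- translated facts for the second index
  have hteq2 : (sd1 i2).2.1 = substC (slot (svf i2) (jj i1) (sd2 i2).2.1) (ζf i1) := by
    rw [hζ12, hj12]; exact hteqf i2
  have hwrap2 : ∀ w vw, A.Run (sd2 i2).1 w vw →
      A.Run (sd1 i2).1 (substC (slot (svf i2) (jj i1) w) (ζf i1)) (vζf i2 + vw) := by
    intro w vw hw
    rw [hζ12, hj12]
    exact hwrapf i2 w vw hw
  -- generic simultaneous replacement, with the right shape
  have hrepl : ∀ (a b : GTree S ar) (va vb : Fin m → ℕ),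
      A.Run (sd1 i1).1 a va → A.Run (sd1 i2).1 b vb →
      A.Run A.init (substC (pick2 a b) (ExchangeAux.dig2 ξ (τ i1) (τ i2)))
        (vc + va + vb) := by
    intro a b va vb hA hB
    have hsC : substC (pick2 a b) (ExchangeAux.dig2 ξ (τ i1) (τ i2)) =
        ExchangeAux.replaceAt (ExchangeAux.replaceAt ξ (τ i1) (pick2 a b 0)) (τ i2)
          (pick2 a b 1) := by
      rw [hE1, hE2]
      exact ExchangeAux.substC_dig2 πc ξ x y σ τ' _ _ (pick2 a b) hxy ha hb
    rw [hsC]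
    have h0 : pick2 a b 0 = a := by simp [pick2]
    have h1 : pick2 a b 1 = b := by simp [pick2]
    rw [h0, h1]
    exact hrep a va b vb hA hB
  -- runs of the four building blocks
  have hrA : A.Run (sd1 i1).1 (sd2 i1).2.1 (sd2 i1).2.2.1 := by
    rw [hst i1]; exact hrun2 i1
  have hrB : A.Run (sd1 i2).1 (sd2 i2).2.1 (sd2 i2).2.2.1 := by
    rw [hst i2]; exact hrun2 i2
  refine ⟨kk i1, ExchangeAux.dig2 ξ (τ i1) (τ i2), ζf i1, svf i1, svf i2,
    (sd2 i1).2.1, (sd2 i2).2.1, jj i1, ?_, hctx i1, hpos i1, hlt i1, hjkf i1, ?_, ?_, ?_⟩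
  · -- IsContext 2
    rw [ExchangeAux.isContext_iff, hE1, hE2,
      ExchangeAux.vlist_dig2 πc ξ x y σ τ' _ _ hxy ha hb]
    decide
  · -- decomposition of ξ
    have := hrepl (sd1 i1).2.1 (sd1 i2).2.1 (sd1 i1).2.2.1 (sd1 i2).2.2.1
    have hsC : substC (pick2 (sd1 i1).2.1 (sd1 i2).2.1)
        (ExchangeAux.dig2 ξ (τ i1) (τ i2)) = ξ := by
      rw [hE1, hE2, ExchangeAux.substC_dig2 πc ξ x y σ τ' _ _ _ hxy ha hb]
      have h0 : pick2 (sd1 i1).2.1 (sd1 i2).2.1 0 = (sd1 i1).2.1 := by simp [pick2]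
      have h1 : pick2 (sd1 i1).2.1 (sd1 i2).2.1 1 = (sd1 i2).2.1 := by simp [pick2]
      rw [h0, h1, ExchangeAux.replaceAt_self _ _ _ ha, ExchangeAux.replaceAt_self _ _ _ hb]
    rw [← hteqf i1, ← hteq2, hsC]
  · -- first exchanged tree is in the language
    have hZ1 : A.Run (sd2 i1).1 (substC (slot (svf i2) (jj i1) (sd2 i2).2.1) (ζf i1))
        (vζf i2 + (sd2 i2).2.2.1) := by
      rw [← hst i1, hq12]
      exact hwrap2 _ _ (hrun2 i2)
    have hZ : A.Run (sd1 i1).1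
        (substC (slot (svf i1) (jj i1)
          (substC (slot (svf i2) (jj i1) (sd2 i2).2.1) (ζf i1))) (ζf i1))
        (vζf i1 + (vζf i2 + (sd2 i2).2.2.1)) :=
      hwrapf i1 _ _ hZ1
    have hZ' := hZ
    rw [hq12] at hZ'
    have hfinal := hrepl _ _ _ _ hrA hZ'
    have hval : vc + (sd2 i1).2.2.1 + (vζf i1 + (vζf i2 + (sd2 i2).2.2.1)) = v := by
      rw [hvtot, hveqf i1, hveqf i2]
      abel
    rw [hval] at hfinal
    exact ⟨v, hfinal, hvC⟩
  · -- second exchanged tree is in the language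
    have hY1 : A.Run (sd2 i2).1 (sd2 i1).2.1 (sd2 i1).2.2.1 := by
      rw [← hst i2, ← hq12, hst i1]
      exact hrun2 i1
    have hY2 := hwrap2 _ _ hY1
    rw [← hq12] at hY2
    have hY := hwrapf i1 _ _ (by rw [hst i1] at hY2; exact hY2)
    have hfinal := hrepl _ _ _ _ hY hrB
    have hval : vc + (vζf i1 + (vζf i2 + (sd2 i1).2.2.1)) + (sd2 i2).2.2.1 = v := by
      rw [hvtot, hveqf i1, hveqf i2]
      abel
    rw [hval] at hfinal
    exact ⟨v, hfinal, hvC⟩
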